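/- The F_II Yang-Baxter map R(x,y) = ((y/p)·W, (x/q)·W) with W = (px - qy + q - p)/(x - y) is an involution wherever defined. -/

import Mathlib

/-- The `F_II` Yang-Baxter map: `R(x,y) = ((y/p)·W, (x/q)·W)` with
`W = (px - qy + q - p)/(x - y)`. -/
noncomputable def FII {K : Type*} [Field K] (p q : K) (P : K × K) : K × K :=
  (P.2 / p * ((p * P.1 - q * P.2 + q - p) / (P.1 - P.2)),
   P.1 / q * ((p * P.1 - q * P.2 + q - p) / (P.1 - P.2)))

/-- The `F_II` map is an involution wherever defined. -/
theorem FII_involution {K : Type*} [Field K] [CharZero K] (p q x y : K)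
    (hp : p ≠ 0) (hq : q ≠ 0) (h1 : x - y ≠ 0)
    (h2 : (FII p q (x, y)).1 - (FII p q (x, y)).2 ≠ 0) :
    FII p q (FII p q (x, y)) = (x, y) := by
  simp only [FII] at h2 ⊢
  field_simp at h2 ⊢
  rw [Prod.mk.injEq]
  obtain ⟨hA, hB⟩ := mul_ne_zero_iff.mp (div_ne_zero_iff.mp h2).1
  constructor <;>
    rw [div_eq_iff (mul_ne_zero (mul_ne_zero hA h1) hB)] <;>
    ring
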